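/- arXiv:2104.05888 — 3 statements merged into one kernel-verified Lean document; each statement's English description precedes it below -/
import Mathlib

section
/- Let x ~ N(μ, σ²) with σ > 0. Then Var(ReLU(x)) < Var(x) = σ², where ReLU(x) = max(x, 0). -/
open MeasureTheory ProbabilityTheory Real

lemma integral_sq_mul_exp_neg_mul_sq {b : ℝ} (hb : 0 < b) :
    ∫ x : ℝ, x ^ 2 * rexp (-b * x ^ 2) = b ^ (-(3:ℝ)/2) * (√π / 2) := by
  have h0 : ∫ x : ℝ, x ^ 2 * rexp (-b * x ^ 2)
      = ∫ x : ℝ, (fun y : ℝ => y ^ 2 * rexp (-b * y ^ 2)) |x| := by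
    congr 1; ext x; simp [sq_abs]
  rw [h0, integral_comp_abs (f := fun y : ℝ => y ^ 2 * rexp (-b * y ^ 2))]
  have h1 : ∫ x in Set.Ioi (0:ℝ), x ^ 2 * rexp (-b * x ^ 2)
      = ∫ x in Set.Ioi (0:ℝ), x ^ (2:ℝ) * rexp (-b * x ^ (2:ℝ)) := by
    refine setIntegral_congr_fun measurableSet_Ioi fun x hx => ?_
    rw [show ((2:ℝ)) = ((2:ℕ):ℝ) by norm_num, Real.rpow_natCast]
  rw [h1, integral_rpow_mul_exp_neg_mul_rpow (by norm_num) (by norm_num) hb]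
  have h2 : Real.Gamma ((2 + 1) / 2) = (1/2) * √π := by
    rw [show ((2:ℝ) + 1)/2 = 1/2 + 1 by norm_num, Real.Gamma_add_one (by norm_num),
      Real.Gamma_one_half_eq]
  rw [h2]
  ring_nf

lemma gaussian_second_moment (μ σ : ℝ) (hσ : 0 < σ) :
    ∫ x : ℝ, gaussianPDFReal μ (Real.toNNReal (σ^2)) x * (x - μ)^2 = σ^2 := by
  set v : NNReal := Real.toNNReal (σ^2) with hv
  have hvv : (v : ℝ) = σ^2 := Real.coe_toNNReal _ (sq_nonneg σ)
  set b : ℝ := (2*σ^2)⁻¹ with hbdef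
  have hb : 0 < b := by positivity
  set C : ℝ := (√(2*π*σ^2))⁻¹ with hC
  have key : ∀ x : ℝ, gaussianPDFReal μ v (x + μ) * ((x + μ) - μ)^2
      = C * (x^2 * rexp (-b * x^2)) := by
    intro x
    rw [gaussianPDFReal]
    simp only [hvv]
    rw [show x + μ - μ = x by ring, show -(x)^2/(2*σ^2) = -b * x^2 by rw [hbdef]; field_simp]
    ring
  have htrans : ∫ x : ℝ, gaussianPDFReal μ v x * (x - μ)^2
      = ∫ x : ℝ, gaussianPDFReal μ v (x + μ) * ((x + μ) - μ)^2 :=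
    (integral_add_right_eq_self (fun x => gaussianPDFReal μ v x * (x - μ)^2) μ).symm
  rw [htrans]
  simp_rw [key]
  rw [integral_const_mul, integral_sq_mul_exp_neg_mul_sq hb]
  set s : ℝ := 2*σ^2 with hs
  have hspos : (0:ℝ) < s := by positivity
  have h1 : b ^ (-(3:ℝ)/2) = s * √s := by
    rw [show b = s⁻¹ from hbdef, ← Real.rpow_neg_one s, ← Real.rpow_mul hspos.le]
    norm_num
    rw [show ((3:ℝ)/2) = 1 + 1/2 by norm_num, Real.rpow_add hspos, Real.rpow_one,
      ← Real.sqrt_eq_rpow]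
  rw [h1, hC, hs]
  have h : √(2*π*σ^2) = √π * √(2*σ^2) := by
    rw [← Real.sqrt_mul pi_pos.le]
    ring_nf
  rw [h]
  have h2 : (0:ℝ) < √(2*σ^2) := Real.sqrt_pos.mpr (by positivity)
  have h3 : (0:ℝ) < √π := Real.sqrt_pos.mpr pi_pos
  field_simp

open MeasureTheory in
lemma integral_fun_gaussianReal {μ : ℝ} {v : NNReal} (hv : v ≠ 0) (g : ℝ → ℝ) :
    ∫ x, g x ∂(gaussianReal μ v) = ∫ x, gaussianPDFReal μ v x * g x := by
  rw [gaussianReal_of_var_ne_zero _ hv]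
  have h : volume.withDensity (gaussianPDF μ v)
      = volume.withDensity (fun x => ((gaussianPDFReal μ v x).toNNReal : ENNReal)) := rfl
  rw [h, integral_withDensity_eq_integral_smul ((measurable_gaussianPDFReal μ v).real_toNNReal) g]
  congr 1; ext x
  rw [NNReal.smul_def, smul_eq_mul, Real.coe_toNNReal _ (gaussianPDFReal_nonneg μ v x)]

open MeasureTheory in
lemma integrable_gaussianReal_iff {μ : ℝ} {v : NNReal} (hv : v ≠ 0) (g : ℝ → ℝ) :
    Integrable g (gaussianReal μ v) ↔ Integrable (fun x => gaussianPDFReal μ v x * g x) := by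
  rw [gaussianReal_of_var_ne_zero _ hv]
  have h : volume.withDensity (gaussianPDF μ v)
      = volume.withDensity (fun x => ((gaussianPDFReal μ v x).toNNReal : ENNReal)) := rfl
  rw [h, integrable_withDensity_iff_integrable_smul
    ((measurable_gaussianPDFReal μ v).real_toNNReal)]
  apply integrable_congr
  filter_upwards with x
  rw [NNReal.smul_def, smul_eq_mul, Real.coe_toNNReal _ (gaussianPDFReal_nonneg μ v x)]

lemma integrable_gaussian_second_moment (μ σ : ℝ) (hσ : 0 < σ) :
    MeasureTheory.Integrable
      (fun x => gaussianPDFReal μ (Real.toNNReal (σ^2)) x * (x - μ)^2) := by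
  set v : NNReal := Real.toNNReal (σ^2) with hv
  set b : ℝ := (2*σ^2)⁻¹ with hbdef
  have hb : 0 < b := by positivity
  set C : ℝ := (√(2*π*σ^2))⁻¹ with hC
  have int1 : MeasureTheory.Integrable (fun x : ℝ => x ^ 2 * rexp (-b * x ^ 2)) := by
    have := integrable_rpow_mul_exp_neg_mul_sq hb (s := 2) (by norm_num)
    apply this.congr
    filter_upwards with x
    rw [show ((2:ℝ)) = ((2:ℕ):ℝ) by norm_num, Real.rpow_natCast]
  have intH : MeasureTheory.Integrable (fun x : ℝ => C * (x ^ 2 * rexp (-b * x ^ 2))) :=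
    int1.const_mul C
  have := intH.comp_sub_right μ
  apply this.congr
  filter_upwards with x
  have hvv : (v : ℝ) = σ^2 := Real.coe_toNNReal _ (sq_nonneg σ)
  rw [gaussianPDFReal]
  simp only [hvv]
  rw [show -(x - μ)^2/(2*σ^2) = -b * (x - μ)^2 by rw [hbdef]; field_simp]
  rw [hC]; ring

theorem variance_relu_lt_variance_gaussian (μ σ : ℝ) (hσ : 0 < σ) :
    variance (fun x => max x 0) (gaussianReal μ (Real.toNNReal (σ ^ 2))) < σ ^ 2 := by
  set v : NNReal := Real.toNNReal (σ ^ 2) with hvdef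
  have hv : v ≠ 0 := by
    simp only [hvdef, ne_eq, Real.toNNReal_eq_zero, not_le]
    positivity
  set ν := gaussianReal μ v with hν
  have hprob : IsProbabilityMeasure ν := by infer_instance
  set f : ℝ → ℝ := fun x => max x 0 with hf
  set c : ℝ := max μ 0 with hc
  have hfc : Continuous f := continuous_id.max continuous_const
  have hfm : MeasureTheory.AEStronglyMeasurable f ν := hfc.aestronglyMeasurable
  -- second moment
  have intM : MeasureTheory.Integrable (fun x => (x - μ)^2) ν :=
    (integrable_gaussianReal_iff hv _).mpr (integrable_gaussian_second_moment μ σ hσ)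
  have hmoment : ∫ x, (x - μ)^2 ∂ν = σ^2 := by
    rw [integral_fun_gaussianReal hv]
    exact gaussian_second_moment μ σ hσ
  -- pointwise bounds
  have hpt : ∀ x, (f x - c)^2 ≤ (x - μ)^2 := by
    intro x
    have h := abs_max_sub_max_le_abs x μ 0
    calc (f x - c)^2 = |f x - c|^2 := (sq_abs _).symm
    _ ≤ |x - μ|^2 := by exact pow_le_pow_left₀ (abs_nonneg _) h 2
    _ = (x - μ)^2 := sq_abs _
  -- integrability of f², f, (f-c)²
  have intM2 : MeasureTheory.Integrable (fun x => 2*(x - μ)^2 + 2*μ^2) ν :=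
    (intM.const_mul 2).add (MeasureTheory.integrable_const _)
  have intf2 : MeasureTheory.Integrable (fun x => f x ^ 2) ν := by
    refine intM2.mono (hfc.pow 2).aestronglyMeasurable (Filter.Eventually.of_forall fun x => ?_)
    have h1 : f x ^ 2 ≤ x ^ 2 := by
      rcases le_or_gt x 0 with h | h
      · simp [hf, max_eq_right h]; positivity
      · simp [hf, max_eq_left h.le]
    have h2 : x ^ 2 ≤ 2*(x - μ)^2 + 2*μ^2 := by nlinarith [sq_nonneg (x - 2*μ)]
    rw [Real.norm_eq_abs, Real.norm_eq_abs, abs_of_nonneg (by positivity : (0:ℝ) ≤ f x ^ 2)]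
    exact le_trans (h1.trans h2) (le_abs_self _)
  have hMem : MeasureTheory.MemLp f 2 ν := (memLp_two_iff_integrable_sq hfm).mpr intf2
  have intf : MeasureTheory.Integrable f ν := hMem.integrable one_le_two
  have intfc : MeasureTheory.Integrable (fun x => (f x - c)^2) ν := by
    have : (fun x => (f x - c)^2) = fun x => f x ^ 2 - (2*c) * f x + c^2 := by ext x; ring
    rw [this]
    exact (intf2.sub (intf.const_mul _)).add (MeasureTheory.integrable_const _)
  -- variance ≤ ∫ (f - c)²
  have hvar : variance f ν ≤ ∫ x, (f x - c)^2 ∂ν := by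
    rw [variance_eq_sub hMem]
    have hexp : ∫ x, (f x - c)^2 ∂ν
        = ∫ x, f x ^ 2 ∂ν - 2*c*∫ x, f x ∂ν + c^2 := by
      have h : (fun x => (f x - c)^2) = fun x => f x ^ 2 - (2*c) * f x + c^2 := by ext x; ring
      have i1 : MeasureTheory.Integrable (fun x => f x ^ 2 - 2 * c * f x) ν := by
        exact intf2.sub (intf.const_mul (2 * c))
      rw [h, MeasureTheory.integral_add i1 (MeasureTheory.integrable_const _),
        MeasureTheory.integral_sub intf2 (intf.const_mul (2 * c)),
        MeasureTheory.integral_const_mul, MeasureTheory.integral_const]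
      simp [measure_univ]
    have hpow : ∫ x, (f ^ 2) x ∂ν = ∫ x, f x ^ 2 ∂ν := by
      apply MeasureTheory.integral_congr_ae
      filter_upwards with x
      simp
    rw [hexp, hpow]
    nlinarith [sq_nonneg ((∫ x, f x ∂ν) - c)]
  -- strictness
  have hposmeas : ∀ s : Set ℝ, MeasureTheory.volume s ≠ 0 → 0 < ν s := by
    intro s hs
    rw [pos_iff_ne_zero]
    intro h0
    exact hs (gaussianReal_absolutelyContinuous' μ hv h0)
  have hstrict : ∫ x, (f x - c)^2 ∂ν < ∫ x, (x - μ)^2 ∂ν := by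
    have hdiff : 0 < ∫ x, ((x - μ)^2 - (f x - c)^2) ∂ν := by
      refine (MeasureTheory.integral_pos_iff_support_of_nonneg_ae
        (Filter.Eventually.of_forall fun x => sub_nonneg.mpr (hpt x))
        (intM.sub intfc)).mpr ?_
      rcases le_or_gt 0 μ with hμ | hμ
      · refine lt_of_lt_of_le (hposmeas (Set.Iio 0) (by simp [Real.volume_Iio])) ?_
        refine MeasureTheory.measure_mono fun x hx => ?_
        simp only [Set.mem_Iio] at hx
        simp only [Function.mem_support]
        have h1 : f x = 0 := by simp [hf, max_eq_right hx.le]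
        have h2 : c = μ := by simp [hc, max_eq_left hμ]
        rw [h1, h2]
        nlinarith
      · refine lt_of_lt_of_le (hposmeas (Set.Ioi 0) (by simp [Real.volume_Ioi])) ?_
        refine MeasureTheory.measure_mono fun x hx => ?_
        simp only [Set.mem_Ioi] at hx
        simp only [Function.mem_support]
        have h1 : f x = x := by simp [hf, max_eq_left hx.le]
        have h2 : c = 0 := by simp [hc, max_eq_right hμ.le]
        rw [h1, h2]
        nlinarith
    rw [MeasureTheory.integral_sub intM intfc] at hdiff
    linarith
  calc variance f ν ≤ ∫ x, (f x - c)^2 ∂ν := hvar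
  _ < ∫ x, (x - μ)^2 ∂ν := hstrict
  _ = σ^2 := hmoment
end

section
/- Let Σ₁, Σ₂ be N×N positive definite matrices and let E₁₂ be an N×N matrix such that the block matrix Σ = [[Σ₁, E₁₂],[E₁₂ᵀ, Σ₂]] is positive semidefinite and the correlation coefficient bound |r| ≤ r_max < 1 holds, meaning that for all vectors a, b: (aᵀE₁₂b)² ≤ r_max² (aᵀΣ₁a)(bᵀΣ₂b). Then with τ = 1 + r_max, the block-diagonal matrix B = [[τΣ₁, 0],[0, τΣ₂]] satisfies B ⪰ Σ, i.e., B - Σ is positive semidefinite. -/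
open Matrix

theorem hanebeck_bound_block_diag {N : ℕ}
    (S1 S2 E : Matrix (Fin N) (Fin N) ℝ) (rmax : ℝ)
    (h1 : S1.PosDef) (h2 : S2.PosDef)
    (hjoint : (Matrix.fromBlocks S1 E Eᵀ S2).PosSemidef)
    (hr0 : 0 ≤ rmax) (hr1 : rmax < 1)
    (hcorr : ∀ a b : Fin N → ℝ,
      (a ⬝ᵥ E.mulVec b) ^ 2 ≤ rmax ^ 2 * (a ⬝ᵥ S1.mulVec a) * (b ⬝ᵥ S2.mulVec b)) :
    (Matrix.fromBlocks ((1 + rmax) • S1) 0 0 ((1 + rmax) • S2)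
      - Matrix.fromBlocks S1 E Eᵀ S2).PosSemidef := by
  rw [Matrix.posSemidef_iff_dotProduct_mulVec]
  constructor
  · have hB : (Matrix.fromBlocks ((1 + rmax) • S1) 0 0 ((1 + rmax) • S2)).IsHermitian := by
      unfold Matrix.IsHermitian
      rw [Matrix.fromBlocks_conjTranspose]
      rw [Matrix.conjTranspose_smul, Matrix.conjTranspose_smul, h1.1.eq, h2.1.eq]
      simp
    exact hB.sub hjoint.1
  · intro x
    set a := x ∘ Sum.inl with ha
    set b := x ∘ Sum.inr with hb
    have hp : 0 ≤ a ⬝ᵥ S1.mulVec a := h1.posSemidef.dotProduct_mulVec_nonneg a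
    have hq : 0 ≤ b ⬝ᵥ S2.mulVec b := h2.posSemidef.dotProduct_mulVec_nonneg b
    have hE := hcorr a b
    have hEba : b ⬝ᵥ Eᵀ.mulVec a = a ⬝ᵥ E.mulVec b := by
      rw [Matrix.dotProduct_mulVec, Matrix.vecMul_transpose, dotProduct_comm,
        Matrix.dotProduct_mulVec]
    have key : 0 ≤ rmax * (a ⬝ᵥ S1.mulVec a) + rmax * (b ⬝ᵥ S2.mulVec b)
        - 2 * (a ⬝ᵥ E.mulVec b) := by
      nlinarith [sq_nonneg ((a ⬝ᵥ S1.mulVec a) - (b ⬝ᵥ S2.mulVec b)),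
        sq_nonneg (rmax * (a ⬝ᵥ S1.mulVec a) + rmax * (b ⬝ᵥ S2.mulVec b) - 2 * (a ⬝ᵥ E.mulVec b)),
        sq_nonneg (rmax * (a ⬝ᵥ S1.mulVec a) + rmax * (b ⬝ᵥ S2.mulVec b) + 2 * (a ⬝ᵥ E.mulVec b)),
        mul_nonneg hp hq, mul_nonneg hr0 hp, mul_nonneg hr0 hq]
    have hexp : (star x) ⬝ᵥ ((Matrix.fromBlocks ((1 + rmax) • S1) 0 0 ((1 + rmax) • S2)
        - Matrix.fromBlocks S1 E Eᵀ S2).mulVec x)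
        = rmax * (a ⬝ᵥ S1.mulVec a) + rmax * (b ⬝ᵥ S2.mulVec b)
          - ((a ⬝ᵥ E.mulVec b) + (b ⬝ᵥ Eᵀ.mulVec a)) := by
      simp only [Matrix.sub_mulVec, Matrix.fromBlocks_mulVec, dotProduct_sub,
        Matrix.dotProduct_block, star_trivial]
      simp [← ha, ← hb, Matrix.smul_mulVec, dotProduct_smul,
        dotProduct_add]
      ring
    rw [hexp, hEba]
    linarith
end

section
/- Let f: R^d → Y be a (measurable) classifier, σ > 0, ε ~ N(0, σ²I), and define the smoothed classifier g(x) = argmax_{c∈Y} P(f(x+ε) = c). Suppose for some x, classes c_A, and bounds p_A, p_B ∈ [0,1] with p_A ≥ p_B, we have P(f(x+ε) = c_A) ≥ p_A and max_{c ≠ c_A} P(f(x+ε) = c) ≤ p_B. Then for every δ with ‖δ‖₂ < (σ/2)(Φ⁻¹(p_A) − Φ⁻¹(p_B)), we have g(x+δ) = c_A. -/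
open MeasureTheory ProbabilityTheory Real
open scoped NNReal ENNReal

/-- CDF of the standard normal distribution. -/
noncomputable def stdNormalCDF (z : ℝ) : ℝ :=
  ((gaussianReal 0 1) (Set.Iic z)).toReal

/-- Quantile function (inverse CDF) of the standard normal distribution. -/
noncomputable def stdNormalQuantile (p : ℝ) : ℝ :=
  Function.invFun stdNormalCDF p

lemma gaussian_shift_density (m : ℝ) (v : ℝ≥0) (hv : v ≠ 0) :
    gaussianReal m v = (gaussianReal 0 v).withDensity
      (fun t => ENNReal.ofReal (Real.exp (m * t / v - m ^ 2 / (2 * v)))) := by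
  rw [gaussianReal_of_var_ne_zero _ hv, gaussianReal_of_var_ne_zero _ hv,
      ← withDensity_mul _ (measurable_gaussianPDF 0 v)
        (Measurable.ennreal_ofReal (by fun_prop))]
  congr 1
  funext t
  simp only [gaussianPDF, Pi.mul_apply,
    ← ENNReal.ofReal_mul (gaussianPDFReal_nonneg 0 v t)]
  congr 1
  simp only [gaussianPDFReal, sub_zero]
  have hv' : (0:ℝ) < v := by positivity
  have h : -(t - m) ^ 2 / (2 * (v:ℝ)) = -t^2/(2*(v:ℝ)) + (m*t/(v:ℝ) - m^2/(2*(v:ℝ))) := by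
    field_simp; ring
  rw [h, Real.exp_add]; ring


lemma pdf_mul (v1 v2 : ℝ≥0) (h1 : v1 ≠ 0) (h2 : v2 ≠ 0) (z x : ℝ) :
    gaussianPDFReal 0 v1 x * gaussianPDFReal x v2 z
      = gaussianPDFReal 0 (v1 + v2) z *
        gaussianPDFReal (z * v1 / (v1 + v2)) (Real.toNNReal ((v1 * v2) / (v1 + v2))) x := by
  have hV1 : (0:ℝ) < v1 := by positivity
  have hV2 : (0:ℝ) < v2 := by positivity
  have hV : (0:ℝ) < (v1:ℝ) + v2 := by linarith
  have hw : (0:ℝ) < (v1:ℝ) * v2 / ((v1:ℝ) + v2) := by positivity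
  simp only [gaussianPDFReal, sub_zero, NNReal.coe_add,
    Real.coe_toNNReal _ hw.le]
  rw [mul_mul_mul_comm, mul_mul_mul_comm ((√(2 * π * ((v1:ℝ)+v2)))⁻¹)]
  congr 1
  · rw [← Real.sqrt_inv, ← Real.sqrt_inv, ← Real.sqrt_inv, ← Real.sqrt_inv,
      ← Real.sqrt_mul (by positivity), ← Real.sqrt_mul (by positivity)]
    congr 1
    field_simp
  · rw [← Real.exp_add, ← Real.exp_add]
    congr 1
    field_simp
    ring



lemma gaussianPDF_measurable_pair (v : ℝ≥0) :
    Measurable (fun q : ℝ × ℝ => gaussianPDF q.1 v q.2) := by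
  refine Measurable.ennreal_ofReal ?_
  unfold gaussianPDFReal
  fun_prop

lemma lintegral_pdf_mul (v1 v2 : ℝ≥0) (h1 : v1 ≠ 0) (h2 : v2 ≠ 0) (z : ℝ) :
    ∫⁻ x, gaussianPDF 0 v1 x * gaussianPDF x v2 z = gaussianPDF 0 (v1 + v2) z := by
  have hV1 : (0:ℝ) < v1 := by positivity
  have hV2 : (0:ℝ) < v2 := by positivity
  have hw : Real.toNNReal ((v1 * v2) / (v1 + v2) : ℝ) ≠ 0 := by
    have : (0:ℝ) < (v1:ℝ) * v2 / ((v1:ℝ) + v2) := by positivity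
    simp [Real.toNNReal_eq_zero, not_le, this]
  calc ∫⁻ x, gaussianPDF 0 v1 x * gaussianPDF x v2 z
      = ∫⁻ x, gaussianPDF 0 (v1 + v2) z *
          gaussianPDF (z * v1 / (v1 + v2)) (Real.toNNReal ((v1 * v2) / (v1 + v2))) x := by
        congr 1; funext x
        simp only [gaussianPDF, ← ENNReal.ofReal_mul (gaussianPDFReal_nonneg 0 v1 x),
          ← ENNReal.ofReal_mul (gaussianPDFReal_nonneg 0 (v1+v2) z)]
        rw [pdf_mul v1 v2 h1 h2 z x]
    _ = gaussianPDF 0 (v1 + v2) z := by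
        rw [lintegral_const_mul _ (measurable_gaussianPDF _ _),
          lintegral_gaussianPDF_eq_one _ hw, mul_one]

lemma gaussian_conv_zero (v1 v2 : ℝ≥0) (h1 : v1 ≠ 0) (h2 : v2 ≠ 0) :
    ((gaussianReal 0 v1).prod (gaussianReal 0 v2)).map (fun p : ℝ × ℝ => p.1 + p.2)
      = gaussianReal 0 (v1 + v2) := by
  have h12 : v1 + v2 ≠ 0 := by simp [h1]
  ext s hs
  rw [Measure.map_apply (by fun_prop) hs,
    Measure.prod_apply (hs.preimage (by fun_prop))]
  have hFm : Measurable (fun p : ℝ × ℝ => s.indicator (gaussianPDF p.1 v2) p.2) := by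
    have he : (fun p : ℝ × ℝ => s.indicator (gaussianPDF p.1 v2) p.2)
        = fun p => (Set.univ ×ˢ s).indicator (fun q : ℝ × ℝ => gaussianPDF q.1 v2 q.2) p := by
      funext p
      by_cases hp : p.2 ∈ s <;> simp [Set.indicator, hp]
    rw [he]
    exact (gaussianPDF_measurable_pair v2).indicator (MeasurableSet.univ.prod hs)
  have step1 : ∀ x : ℝ,
      gaussianReal 0 v2 (Prod.mk x ⁻¹' ((fun p : ℝ × ℝ => p.1 + p.2) ⁻¹' s))
        = ∫⁻ z, s.indicator (gaussianPDF x v2) z ∂volume := by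
    intro x
    have hpre : (Prod.mk x ⁻¹' ((fun p : ℝ × ℝ => p.1 + p.2) ⁻¹' s)) = (fun y => x + y) ⁻¹' s := rfl
    rw [hpre, ← Measure.map_apply (by fun_prop) hs, gaussianReal_map_const_add, zero_add,
      gaussianReal_apply _ h2, ← lintegral_indicator hs]
  simp_rw [step1]
  rw [gaussianReal_of_var_ne_zero 0 h1,
    lintegral_withDensity_eq_lintegral_mul _ (measurable_gaussianPDF 0 v1)
      (Measurable.lintegral_prod_right' hFm)]
  simp only [Pi.mul_apply]
  have swap : ∫⁻ x, gaussianPDF 0 v1 x * ∫⁻ z, s.indicator (gaussianPDF x v2) z ∂volume ∂volume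
      = ∫⁻ z, ∫⁻ x, gaussianPDF 0 v1 x * s.indicator (gaussianPDF x v2) z ∂volume ∂volume := by
    simp_rw [← lintegral_const_mul'' _ (((measurable_gaussianPDF _ v2).indicator hs).aemeasurable)]
    exact lintegral_lintegral_swap
      (((measurable_gaussianPDF 0 v1).comp measurable_fst).mul hFm).aemeasurable
  rw [swap]
  have step2 : ∀ z : ℝ, ∫⁻ x, gaussianPDF 0 v1 x * s.indicator (gaussianPDF x v2) z ∂volume
      = s.indicator (gaussianPDF 0 (v1 + v2)) z := by
    intro z
    by_cases hz : z ∈ s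
    · simp only [Set.indicator_of_mem hz]
      exact lintegral_pdf_mul v1 v2 h1 h2 z
    · simp [Set.indicator_of_notMem hz]
  simp_rw [step2]
  rw [lintegral_indicator hs, ← gaussianReal_apply _ h12]



lemma gaussian_map_zero_add (m : ℝ) (v : ℝ≥0) :
    (gaussianReal 0 v).map (· + m) = gaussianReal m v := by
  rw [gaussianReal_map_add_const, zero_add]

lemma gaussian_conv (m1 m2 : ℝ) (v1 v2 : ℝ≥0) :
    ((gaussianReal m1 v1).prod (gaussianReal m2 v2)).map (fun p : ℝ × ℝ => p.1 + p.2)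
      = gaussianReal (m1 + m2) (v1 + v2) := by
  by_cases h1 : v1 = 0
  · subst h1
    rw [gaussianReal_zero_var, Measure.dirac_prod, zero_add,
      Measure.map_map (by fun_prop) (by fun_prop)]
    have : ((fun p : ℝ × ℝ => p.1 + p.2) ∘ Prod.mk m1) = (· + m1) := by
      funext y; simp [add_comm]
    rw [this, gaussianReal_map_add_const, add_comm m2 m1]
  by_cases h2 : v2 = 0
  · subst h2
    rw [gaussianReal_zero_var, Measure.prod_dirac, add_zero,
      Measure.map_map (by fun_prop) (by fun_prop)]
    have : ((fun p : ℝ × ℝ => p.1 + p.2) ∘ (fun x => (x, m2))) = (· + m2) := rfl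
    rw [this, gaussianReal_map_add_const]
  · rw [← gaussian_map_zero_add m1 v1, ← gaussian_map_zero_add m2 v2,
      Measure.map_prod_map _ _ (by fun_prop) (by fun_prop),
      Measure.map_map (by fun_prop) (by fun_prop)]
    have : ((fun p : ℝ × ℝ => p.1 + p.2) ∘ Prod.map (· + m1) (· + m2))
        = ((· + (m1 + m2)) ∘ fun p : ℝ × ℝ => p.1 + p.2) := by
      funext p; simp [Prod.map]; ring
    rw [this, ← Measure.map_map (by fun_prop) (by fun_prop),
      gaussian_conv_zero v1 v2 h1 h2, gaussianReal_map_add_const, zero_add]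

lemma gaussian_sum (v : ℝ≥0) : ∀ (n : ℕ) (w : Fin n → ℝ),
    (Measure.pi (fun _ : Fin n => gaussianReal 0 v)).map (fun y => ∑ i, w i * y i)
      = gaussianReal 0 (Real.toNNReal (∑ i, (w i)^2) * v) := by
  intro n
  induction n with
  | zero =>
    intro w
    simp only [Finset.univ_eq_empty, Finset.sum_empty, Real.toNNReal_zero, zero_mul,
      gaussianReal_zero_var]
    rw [show (fun y : Fin 0 → ℝ => (0:ℝ)) = (fun _ => 0) from rfl, Measure.map_const]
    simp
  | succ n ih =>
    intro w
    set e := MeasurableEquiv.piFinSuccAbove (fun _ : Fin (n+1) => ℝ) 0 with he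
    have hmp := measurePreserving_piFinSuccAbove (fun _ : Fin (n+1) => gaussianReal 0 v) 0
    have hpi : (Measure.pi (fun _ : Fin (n+1) => gaussianReal 0 v))
        = (((gaussianReal 0 v).prod (Measure.pi (fun _ : Fin n => gaussianReal 0 v))).map e.symm) :=
      ((hmp.symm e).map_eq).symm
    rw [hpi, Measure.map_map (by fun_prop) (by fun_prop)]
    have hfun : ((fun y : Fin (n+1) → ℝ => ∑ i, w i * y i) ∘ e.symm)
        = ((fun p : ℝ × ℝ => p.1 + p.2) ∘
            Prod.map (fun a : ℝ => w 0 * a) (fun y : Fin n → ℝ => ∑ j, w j.succ * y j)) := by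
      funext p
      simp [e, MeasurableEquiv.piFinSuccAbove, Fin.sum_univ_succ, Fin.insertNthEquiv,
        Fin.zero_succAbove, Prod.map]
    rw [hfun, ← Measure.map_map (by fun_prop) (by fun_prop),
      ← Measure.map_prod_map (f := fun a : ℝ => w 0 * a)
        (g := fun y : Fin n → ℝ => ∑ j, w j.succ * y j) _ _ (by fun_prop) (by fun_prop),
      gaussianReal_map_const_mul, ih (fun j => w j.succ), mul_zero, gaussian_conv]
    congr 1
    · simp
    · rw [Fin.sum_univ_succ]
      rw [Real.toNNReal_add (sq_nonneg _) (Finset.sum_nonneg fun _ _ => sq_nonneg _), add_mul]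
      congr 2
      ext
      simp [Real.coe_toNNReal _ (sq_nonneg (w 0))]



lemma map_equiv_withDensity {α β : Type*} [MeasurableSpace α] [MeasurableSpace β]
    (e : α ≃ᵐ β) (ν : Measure α) {g : β → ℝ≥0∞} (hg : Measurable g) :
    (ν.map e).withDensity g = (ν.withDensity (g ∘ e)).map e := by
  ext s hs
  rw [withDensity_apply _ hs, MeasurableEquiv.map_apply,
    withDensity_apply _ (hs.preimage e.measurable),
    setLIntegral_map hs hg e.measurable]
  rfl

lemma prod_withDensity {α β : Type*} [MeasurableSpace α] [MeasurableSpace β]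
    (μ : Measure α) (ν : Measure β) [SigmaFinite μ] [SigmaFinite ν]
    {g1 : α → ℝ≥0∞} {g2 : β → ℝ≥0∞} (h1 : Measurable g1) (h2 : Measurable g2)
    (hs1 : SigmaFinite (μ.withDensity g1)) (hs2 : SigmaFinite (ν.withDensity g2)) :
    (μ.withDensity g1).prod (ν.withDensity g2)
      = (μ.prod ν).withDensity (fun p => g1 p.1 * g2 p.2) := by
  refine Measure.prod_eq fun s t hs ht => ?_
  rw [withDensity_apply _ (hs.prod ht), ← lintegral_indicator (hs.prod ht)]
  have hind : ∀ p : α × β, (s ×ˢ t).indicator (fun p : α × β => g1 p.1 * g2 p.2) p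
      = s.indicator g1 p.1 * t.indicator g2 p.2 := by
    intro p
    by_cases hps : p.1 ∈ s <;> by_cases hpt : p.2 ∈ t <;>
      simp [Set.indicator, hps, hpt, Set.mem_prod]
  simp_rw [hind]
  rw [lintegral_prod_mul (h1.indicator hs).aemeasurable (h2.indicator ht).aemeasurable,
    lintegral_indicator hs, lintegral_indicator ht, withDensity_apply _ hs,
    withDensity_apply _ ht]

lemma pi_gaussian_density (v : ℝ≥0) (hv : v ≠ 0) : ∀ (n : ℕ) (m : Fin n → ℝ),
    Measure.pi (fun i : Fin n => gaussianReal (m i) v)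
      = (Measure.pi fun _ : Fin n => gaussianReal 0 v).withDensity
          (fun y => ENNReal.ofReal (Real.exp (∑ i, (m i * y i / v - (m i)^2 / (2*v))))) := by
  intro n
  induction n with
  | zero =>
    intro m
    simp only [Finset.univ_eq_empty, Finset.sum_empty, Real.exp_zero, ENNReal.ofReal_one]
    rw [show (fun _ : Fin 0 → ℝ => (1:ℝ≥0∞)) = 1 from rfl, withDensity_one]
    refine (Measure.pi_eq fun s _ => ?_).symm
    have : Set.univ.pi s = Set.univ := by
      ext y; simp
    simp [this]
  | succ n ih =>
    intro m
    set e := MeasurableEquiv.piFinSuccAbove (fun _ : Fin (n+1) => ℝ) 0 with he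
    have hmp0 := measurePreserving_piFinSuccAbove (fun _ : Fin (n+1) => gaussianReal 0 v) 0
    have hmpm := measurePreserving_piFinSuccAbove (fun i : Fin (n+1) => gaussianReal (m i) v) 0
    have htail : (fun j : Fin n => gaussianReal (m ((0 : Fin (n+1)).succAbove j)) v)
        = fun j : Fin n => gaussianReal (m j.succ) v := by
      funext j; rw [Fin.zero_succAbove]
    have hgm : Measurable (fun t : ℝ =>
        ENNReal.ofReal (Real.exp (m 0 * t / v - (m 0) ^ 2 / (2 * v)))) :=
      Measurable.ennreal_ofReal (by fun_prop)
    have hgt : Measurable (fun y : Fin n → ℝ =>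
        ENNReal.ofReal (Real.exp (∑ j, (m j.succ * y j / v - (m j.succ)^2 / (2*v))))) :=
      Measurable.ennreal_ofReal (by fun_prop)
    have hpi : Measure.pi (fun i : Fin (n+1) => gaussianReal (m i) v)
        = (((gaussianReal (m 0) v).prod
            (Measure.pi fun j : Fin n => gaussianReal (m j.succ) v)).map e.symm) := by
      rw [← htail]
      exact ((hmpm.symm e).map_eq).symm
    rw [hpi, gaussian_shift_density (m 0) v hv, ih (fun j => m j.succ),
      prod_withDensity _ _ hgm hgt
        (by rw [← gaussian_shift_density (m 0) v hv]; infer_instance)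
        (by rw [← ih (fun j => m j.succ)]; infer_instance)]
    have hG : (fun p : ℝ × (Fin n → ℝ) =>
          ENNReal.ofReal (Real.exp (m 0 * p.1 / v - (m 0)^2 / (2*v))) *
          ENNReal.ofReal (Real.exp (∑ j, (m j.succ * p.2 j / v - (m j.succ)^2 / (2*v)))))
        = (fun y : Fin (n+1) → ℝ =>
            ENNReal.ofReal (Real.exp (∑ i, (m i * y i / v - (m i)^2 / (2*v))))) ∘ e.symm := by
      funext p
      have hv0 : (e.symm p) 0 = p.1 := by
        rw [he, MeasurableEquiv.piFinSuccAbove_symm_apply]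
        simp [Fin.insertNthEquiv]
      have hvs : ∀ j : Fin n, (e.symm p) j.succ = p.2 j := by
        intro j
        rw [he, MeasurableEquiv.piFinSuccAbove_symm_apply, ← Fin.zero_succAbove]
        simp [Fin.insertNthEquiv]
      simp only [Function.comp_apply, Fin.sum_univ_succ, hv0, hvs, Real.exp_add,
        ENNReal.ofReal_mul (Real.exp_nonneg _)]
    rw [hG, ← map_equiv_withDensity e.symm _ (Measurable.ennreal_ofReal (by fun_prop)),
      (hmp0.symm e).map_eq]



lemma gauss_Iic_toReal (m a : ℝ) (v : ℝ≥0) (hv : v ≠ 0) :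
    (gaussianReal m v (Set.Iic a)).toReal = stdNormalCDF ((a - m) / Real.sqrt v) := by
  have hvpos : (0:ℝ) < (v:ℝ) := by positivity
  have hc : (0:ℝ) < Real.sqrt v := Real.sqrt_pos.mpr hvpos
  have hmap : gaussianReal m v = (gaussianReal 0 1).map (fun x => Real.sqrt v * x + m) := by
    have h1 : (fun x : ℝ => Real.sqrt v * x + m)
        = (· + m) ∘ (fun x : ℝ => Real.sqrt v * x) := rfl
    rw [h1, ← Measure.map_map (by fun_prop) (by fun_prop), gaussianReal_map_const_mul,
      gaussianReal_map_add_const, mul_zero, zero_add]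
    congr 2
    ext
    push_cast
    rw [Real.sq_sqrt hvpos.le]
    simp
  rw [hmap, Measure.map_apply (by fun_prop) measurableSet_Iic]
  have hpre : (fun x : ℝ => Real.sqrt v * x + m) ⁻¹' Set.Iic a
      = Set.Iic ((a - m) / Real.sqrt v) := by
    ext x
    simp only [Set.mem_preimage, Set.mem_Iic]
    rw [le_div_iff₀ hc]
    constructor <;> intro h <;> nlinarith
  rw [hpre]
  rfl

lemma gauss_singleton (m a : ℝ) (v : ℝ≥0) (hv : v ≠ 0) :
    gaussianReal m v {a} = 0 :=
  gaussianReal_absolutelyContinuous m hv (measure_singleton a)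

lemma gauss_Ici_toReal (m a : ℝ) (v : ℝ≥0) (hv : v ≠ 0) :
    (gaussianReal m v (Set.Ici a)).toReal = 1 - stdNormalCDF ((a - m) / Real.sqrt v) := by
  have h1 : gaussianReal m v (Set.Iic a) = gaussianReal m v (Set.Iio a) := by
    rw [← Set.Iio_union_right, measure_union (by simp) (measurableSet_singleton a),
      gauss_singleton m a v hv, add_zero]
  have h2 : gaussianReal m v (Set.Ici a) = 1 - gaussianReal m v (Set.Iic a) := by
    rw [h1, ← prob_compl_eq_one_sub measurableSet_Iio, Set.compl_Iio]
  rw [h2, ENNReal.toReal_sub_of_le prob_le_one (by simp), gauss_Iic_toReal m a v hv]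
  simp

lemma stdNormalCDF_strictMono : StrictMono stdNormalCDF := by
  intro a b hab
  have key : gaussianReal 0 1 (Set.Iic a) + gaussianReal 0 1 (Set.Ioc a b)
      = gaussianReal 0 1 (Set.Iic b) := by
    rw [← measure_union (Set.Iic_disjoint_Ioc le_rfl) measurableSet_Ioc,
      Set.Iic_union_Ioc_eq_Iic hab.le]
  have hpos : gaussianReal 0 1 (Set.Ioc a b) ≠ 0 := by
    intro h0
    have hvol : volume (Set.Ioc a b) = 0 := gaussianReal_absolutelyContinuous' 0 one_ne_zero h0
    rw [Real.volume_Ioc] at hvol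
    simp only [ENNReal.ofReal_eq_zero, sub_nonpos] at hvol
    exact absurd hvol (not_le.mpr hab)
  have hlt : gaussianReal 0 1 (Set.Iic a) < gaussianReal 0 1 (Set.Iic b) := by
    rw [← key]
    exact ENNReal.lt_add_right (measure_ne_top _ _) hpos
  exact (ENNReal.toReal_lt_toReal (measure_ne_top _ _) (measure_ne_top _ _)).mpr hlt

lemma stdNormalCDF_mono_diff (a b : ℝ) (hab : a ≤ b) :
    stdNormalCDF b - stdNormalCDF a ≤ (Real.sqrt (2*π))⁻¹ * (b - a) := by
  have key : gaussianReal 0 1 (Set.Iic a) + gaussianReal 0 1 (Set.Ioc a b)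
      = gaussianReal 0 1 (Set.Iic b) := by
    rw [← measure_union (Set.Iic_disjoint_Ioc le_rfl) measurableSet_Ioc,
      Set.Iic_union_Ioc_eq_Iic hab]
  have hdiff : stdNormalCDF b - stdNormalCDF a = (gaussianReal 0 1 (Set.Ioc a b)).toReal := by
    unfold stdNormalCDF
    rw [← key, ENNReal.toReal_add (measure_ne_top _ _) (measure_ne_top _ _)]
    ring
  have hb : ∀ x : ℝ, gaussianPDF 0 1 x ≤ ENNReal.ofReal ((Real.sqrt (2*π))⁻¹) := by
    intro x
    apply ENNReal.ofReal_le_ofReal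
    unfold gaussianPDFReal
    push_cast
    rw [mul_one, sub_zero]
    refine mul_le_of_le_one_right (by positivity) (Real.exp_le_one_iff.mpr ?_)
    have : (0:ℝ) ≤ x^2 / 2 := by positivity
    linarith
  have hle : gaussianReal 0 1 (Set.Ioc a b)
      ≤ ENNReal.ofReal ((Real.sqrt (2*π))⁻¹ * (b - a)) := by
    rw [gaussianReal_apply 0 one_ne_zero]
    calc ∫⁻ x in Set.Ioc a b, gaussianPDF 0 1 x
        ≤ ∫⁻ _ in Set.Ioc a b, ENNReal.ofReal ((Real.sqrt (2*π))⁻¹) :=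
          setLIntegral_mono measurable_const (fun x _ => hb x)
      _ = ENNReal.ofReal ((Real.sqrt (2*π))⁻¹) * volume (Set.Ioc a b) :=
          setLIntegral_const _ _
      _ = ENNReal.ofReal ((Real.sqrt (2*π))⁻¹ * (b - a)) := by
          rw [Real.volume_Ioc, ← ENNReal.ofReal_mul (by positivity)]
  rw [hdiff]
  calc (gaussianReal 0 1 (Set.Ioc a b)).toReal
      ≤ (ENNReal.ofReal ((Real.sqrt (2*π))⁻¹ * (b - a))).toReal :=
        ENNReal.toReal_mono ENNReal.ofReal_ne_top hle
    _ = (Real.sqrt (2*π))⁻¹ * (b - a) :=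
        ENNReal.toReal_ofReal (mul_nonneg (by positivity) (sub_nonneg.mpr hab))

lemma stdNormalCDF_continuous : Continuous stdNormalCDF := by
  have hmono := stdNormalCDF_strictMono.monotone
  refine (LipschitzWith.of_dist_le_mul (K := Real.toNNReal ((Real.sqrt (2*π))⁻¹))
    (f := stdNormalCDF) ?_).continuous
  intro x y
  rcases le_total x y with h | h
  · rw [Real.dist_eq, Real.dist_eq, abs_of_nonpos (by simp [hmono h]),
      abs_of_nonpos (by linarith)]
    have := stdNormalCDF_mono_diff x y h
    rw [Real.coe_toNNReal _ (by positivity)]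
    linarith
  · rw [Real.dist_eq, Real.dist_eq, abs_of_nonneg (by simp [hmono h]),
      abs_of_nonneg (by linarith)]
    have := stdNormalCDF_mono_diff y x h
    rw [Real.coe_toNNReal _ (by positivity)]
    linarith

lemma stdNormalCDF_neg (z : ℝ) : stdNormalCDF (-z) = 1 - stdNormalCDF z := by
  have hmap : (gaussianReal 0 1).map (fun x : ℝ => (-1) * x) = gaussianReal 0 1 := by
    rw [gaussianReal_map_const_mul]
    norm_num
  have hpre : (fun x : ℝ => (-1) * x) ⁻¹' Set.Iic (-z) = Set.Ici z := by
    ext x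
    simp only [Set.mem_preimage, Set.mem_Iic, Set.mem_Ici, neg_one_mul, neg_le_neg_iff]
  have hmeas : (gaussianReal 0 1) (Set.Iic (-z)) = (gaussianReal 0 1) (Set.Ici z) := by
    conv_lhs => rw [← hmap]
    rw [Measure.map_apply (by fun_prop) measurableSet_Iic, hpre]
  unfold stdNormalCDF
  rw [hmeas, gauss_Ici_toReal 0 z 1 one_ne_zero]
  simp only [sub_zero, NNReal.coe_one, Real.sqrt_one, div_one]
  rfl

lemma stdNormalCDF_tendsto_one : Filter.Tendsto stdNormalCDF Filter.atTop (nhds 1) := by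
  have h := tendsto_measure_Iic_atTop (gaussianReal 0 1)
  have h2 := (ENNReal.tendsto_toReal (a := gaussianReal 0 1 Set.univ) (by simp)).comp h
  show Filter.Tendsto (fun x => ((gaussianReal 0 1) (Set.Iic x)).toReal) _ _
  simpa [Function.comp_def] using h2

lemma stdNormalCDF_quantile_eq {p : ℝ} (hp0 : 0 < p) (hp1 : p < 1) :
    stdNormalCDF (stdNormalQuantile p) = p := by
  obtain ⟨b, hb⟩ : ∃ b, p < stdNormalCDF b :=
    (stdNormalCDF_tendsto_one.eventually (eventually_gt_nhds hp1)).exists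
  obtain ⟨a', ha'⟩ : ∃ a', 1 - p < stdNormalCDF a' :=
    (stdNormalCDF_tendsto_one.eventually (eventually_gt_nhds (by linarith))).exists
  have ha : stdNormalCDF (-a') < p := by
    rw [stdNormalCDF_neg]; linarith
  have hrange : p ∈ Set.range stdNormalCDF := by
    have := intermediate_value_univ (-a') b stdNormalCDF_continuous
    exact this ⟨ha.le, hb.le⟩
  exact Function.invFun_eq hrange


lemma NP_lower {α : Type*} [MeasurableSpace α] (μ : Measure α) [IsFiniteMeasure μ]
    {L : α → ℝ≥0∞} (hL : Measurable L) {A H : Set α}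
    (hA : MeasurableSet A) (hH : MeasurableSet H) (τ : ℝ≥0∞)
    (hHle : ∀ y ∈ H, L y ≤ τ) (hHge : ∀ y ∉ H, τ ≤ L y) (hμ : μ H ≤ μ A) :
    μ.withDensity L H ≤ μ.withDensity L A := by
  have key : μ.withDensity L (H \ A) ≤ μ.withDensity L (A \ H) := by
    have hdm : μ (H \ A) ≤ μ (A \ H) := by
      have h1 := measure_diff_add_inter H hA (μ := μ)
      have h2 := measure_diff_add_inter A hH (μ := μ)
      rw [Set.inter_comm A H] at h2
      have : μ (H \ A) + μ (H ∩ A) ≤ μ (A \ H) + μ (H ∩ A) := by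
        rw [h1, h2]; exact hμ
      exact (ENNReal.add_le_add_iff_right (measure_ne_top μ _)).mp this
    calc μ.withDensity L (H \ A) = ∫⁻ y in H \ A, L y ∂μ :=
          withDensity_apply _ (hH.diff hA)
      _ ≤ ∫⁻ _ in H \ A, τ ∂μ :=
          setLIntegral_mono measurable_const (fun y hy => hHle y hy.1)
      _ = τ * μ (H \ A) := setLIntegral_const _ _
      _ ≤ τ * μ (A \ H) := by gcongr
      _ = ∫⁻ _ in A \ H, τ ∂μ := (setLIntegral_const _ _).symm
      _ ≤ ∫⁻ y in A \ H, L y ∂μ :=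
          setLIntegral_mono hL (fun y hy => hHge y hy.2)
      _ = μ.withDensity L (A \ H) := (withDensity_apply _ (hA.diff hH)).symm
  calc μ.withDensity L H
      = μ.withDensity L (H \ A) + μ.withDensity L (H ∩ A) :=
        (measure_diff_add_inter H hA).symm
    _ ≤ μ.withDensity L (A \ H) + μ.withDensity L (A ∩ H) := by
        rw [Set.inter_comm H A]
        exact add_le_add key le_rfl
    _ = μ.withDensity L A := measure_diff_add_inter A hH

lemma NP_upper {α : Type*} [MeasurableSpace α] (μ : Measure α) [IsFiniteMeasure μ]
    {L : α → ℝ≥0∞} (hL : Measurable L) {B U : Set α}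
    (hB : MeasurableSet B) (hU : MeasurableSet U) (τ : ℝ≥0∞)
    (hUge : ∀ y ∈ U, τ ≤ L y) (hUle : ∀ y ∉ U, L y ≤ τ) (hμ : μ B ≤ μ U) :
    μ.withDensity L B ≤ μ.withDensity L U := by
  have key : μ.withDensity L (B \ U) ≤ μ.withDensity L (U \ B) := by
    have hdm : μ (B \ U) ≤ μ (U \ B) := by
      have h1 := measure_diff_add_inter B hU (μ := μ)
      have h2 := measure_diff_add_inter U hB (μ := μ)
      rw [Set.inter_comm U B] at h2
      have : μ (B \ U) + μ (B ∩ U) ≤ μ (U \ B) + μ (B ∩ U) := by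
        rw [h1, h2]; exact hμ
      exact (ENNReal.add_le_add_iff_right (measure_ne_top μ _)).mp this
    calc μ.withDensity L (B \ U) = ∫⁻ y in B \ U, L y ∂μ :=
          withDensity_apply _ (hB.diff hU)
      _ ≤ ∫⁻ _ in B \ U, τ ∂μ :=
          setLIntegral_mono measurable_const (fun y hy => hUle y hy.2)
      _ = τ * μ (B \ U) := setLIntegral_const _ _
      _ ≤ τ * μ (U \ B) := by gcongr
      _ = ∫⁻ _ in U \ B, τ ∂μ := (setLIntegral_const _ _).symm
      _ ≤ ∫⁻ y in U \ B, L y ∂μ :=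
          setLIntegral_mono hL (fun y hy => hUge y hy.1)
      _ = μ.withDensity L (U \ B) := (withDensity_apply _ (hU.diff hB)).symm
  calc μ.withDensity L B
      = μ.withDensity L (B \ U) + μ.withDensity L (B ∩ U) :=
        (measure_diff_add_inter B hU).symm
    _ ≤ μ.withDensity L (U \ B) + μ.withDensity L (U ∩ B) := by
        rw [Set.inter_comm B U]
        exact add_le_add key le_rfl
    _ = μ.withDensity L U := measure_diff_add_inter U hB

theorem certified_radius_randomized_smoothing
    {d : ℕ} {Y : Type*} [MeasurableSpace Y] [MeasurableSingletonClass Y]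
    (f : (Fin d → ℝ) → Y) (hf : Measurable f) (σ : ℝ) (hσ : 0 < σ)
    (x : Fin d → ℝ) (cA : Y) (pA pB : ℝ)
    (hpA : pA ∈ Set.Icc (0 : ℝ) 1) (hpB : pB ∈ Set.Icc (0 : ℝ) 1) (hAB : pB ≤ pA)
    (μ : Measure (Fin d → ℝ))
    (hμ : μ = Measure.pi (fun _ : Fin d => gaussianReal 0 (Real.toNNReal (σ ^ 2))))
    (hA : pA ≤ (μ {ε | f (fun i => x i + ε i) = cA}).toReal)
    (hB : ∀ c, c ≠ cA → (μ {ε | f (fun i => x i + ε i) = c}).toReal ≤ pB) :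
    ∀ δ : Fin d → ℝ,
      Real.sqrt (∑ i, δ i ^ 2) <
        σ / 2 * (stdNormalQuantile pA - stdNormalQuantile pB) →
      ∀ c, c ≠ cA →
        μ {ε | f (fun i => x i + δ i + ε i) = c} <
          μ {ε | f (fun i => x i + δ i + ε i) = cA} := by
  intro δ hδ c hc
  set V : ℝ≥0 := Real.toNNReal (σ ^ 2) with hVdef
  have hV : V ≠ 0 := by
    simp only [hVdef, ne_eq, Real.toNNReal_eq_zero, not_le]
    positivity
  have hVr : (V : ℝ) = σ ^ 2 := Real.coe_toNNReal _ (sq_nonneg σ)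
  have hVpos : (0:ℝ) < (V:ℝ) := by rw [hVr]; positivity
  haveI : IsProbabilityMeasure μ := by rw [hμ]; infer_instance
  set A : Set (Fin d → ℝ) := {ε | f (fun i => x i + ε i) = cA} with hAdef
  set B : Set (Fin d → ℝ) := {ε | f (fun i => x i + ε i) = c} with hBdef
  have hshift : Measurable (fun ε : Fin d → ℝ => (fun i => x i + ε i)) :=
    measurable_pi_lambda _ (fun i => by fun_prop)
  have hA_m : MeasurableSet A := (hf.comp hshift) (measurableSet_singleton cA)
  have hB_m : MeasurableSet B := (hf.comp hshift) (measurableSet_singleton c)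
  have hBsubAc : B ⊆ Aᶜ := by
    intro ε hε hεA
    exact hc (hε.symm.trans hεA)
  set ν : Measure (Fin d → ℝ) := μ.map (· + δ) with hνdef
  haveI : IsProbabilityMeasure ν := Measure.isProbabilityMeasure_map (measurable_add_const δ).aemeasurable
  have hνB : μ {ε | f (fun i => x i + δ i + ε i) = c} = ν B := by
    have hgoalB : {ε | f (fun i => x i + δ i + ε i) = c} = (fun ε => ε + δ) ⁻¹' B := by
      ext ε
      simp only [Set.mem_setOf_eq, Set.mem_preimage, hBdef]
      have harg : (fun i => x i + (ε + δ) i) = (fun i => x i + δ i + ε i) := by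
        funext i; simp only [Pi.add_apply]; ring
      rw [harg]
    rw [hgoalB, hνdef, Measure.map_apply (measurable_add_const δ) hB_m]
  have hνA : μ {ε | f (fun i => x i + δ i + ε i) = cA} = ν A := by
    have hgoalA : {ε | f (fun i => x i + δ i + ε i) = cA} = (fun ε => ε + δ) ⁻¹' A := by
      ext ε
      simp only [Set.mem_setOf_eq, Set.mem_preimage, hAdef]
      have harg : (fun i => x i + (ε + δ) i) = (fun i => x i + δ i + ε i) := by
        funext i; simp only [Pi.add_apply]; ring
      rw [harg]
    rw [hgoalA, hνdef, Measure.map_apply (measurable_add_const δ) hA_m]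
  rw [hνB, hνA]
  set L : (Fin d → ℝ) → ℝ≥0∞ :=
    fun y => ENNReal.ofReal (Real.exp (∑ i, (δ i * y i / V - (δ i)^2 / (2*V)))) with hLdef
  have hLmeas : Measurable L := Measurable.ennreal_ofReal (by fun_prop)
  have hLpos : ∀ y, L y ≠ 0 := by
    intro y
    simp only [hLdef, ne_eq, ENNReal.ofReal_eq_zero, not_le]
    exact Real.exp_pos _
  have hνpi : ν = Measure.pi (fun i => gaussianReal (δ i) V) := by
    rw [hνdef, hμ]
    refine (Measure.pi_eq fun s hs => ?_).symm
    rw [Measure.map_apply (measurable_add_const δ) (MeasurableSet.univ_pi hs)]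
    have hpre : (· + δ) ⁻¹' (Set.univ.pi s) = Set.univ.pi (fun i => (· + δ i) ⁻¹' s i) := by
      ext y
      simp [Set.mem_pi]
    rw [hpre, Measure.pi_pi]
    refine Finset.prod_congr rfl fun i _ => ?_
    rw [← Measure.map_apply (measurable_add_const (δ i)) (hs i),
      gaussianReal_map_add_const, zero_add]
  have hνdens : ν = μ.withDensity L := by
    rw [hνpi, pi_gaussian_density V hV d δ, hμ]
  by_cases hB0 : μ B = 0
  · -- B is μ-null
    have hpApos : 0 < pA := by
      by_contra h
      push_neg at h
      have hpA0 : pA = 0 := le_antisymm h hpA.1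
      have hpB0 : pB = 0 := le_antisymm (hpA0 ▸ hAB) hpB.1
      rw [hpA0, hpB0, sub_self, mul_zero] at hδ
      exact absurd hδ (not_lt.mpr (Real.sqrt_nonneg _))
    have hμA : μ A ≠ 0 := by
      intro h0
      rw [h0] at hA
      simp only [ENNReal.toReal_zero] at hA
      linarith
    have hνB0 : ν B = 0 := by
      rw [hνdens, withDensity_apply _ hB_m, setLIntegral_measure_zero _ _ hB0]
    have hνApos : ν A ≠ 0 := by
      rw [hνdens]
      intro h0
      rw [withDensity_apply_eq_zero hLmeas] at h0
      have heq : {y | L y ≠ 0} ∩ A = A :=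
        Set.inter_eq_self_of_subset_right (fun y _ => hLpos y)
      rw [heq] at h0
      exact hμA h0
    rw [hνB0]
    exact pos_iff_ne_zero.mpr hνApos
  · -- μ B ≠ 0
    have hpBpos : 0 < pB :=
      lt_of_lt_of_le (ENNReal.toReal_pos hB0 (measure_ne_top _ _)) (hB c hc)
    have hpA1 : pA < 1 := by
      by_contra h
      push_neg at h
      have hμA1 : μ A = 1 := by
        refine le_antisymm prob_le_one ?_
        have h1 : (1:ℝ) ≤ (μ A).toReal := le_trans h hA
        calc (1:ℝ≥0∞) = ENNReal.ofReal 1 := by simp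
          _ ≤ ENNReal.ofReal (μ A).toReal := ENNReal.ofReal_le_ofReal h1
          _ = μ A := ENNReal.ofReal_toReal (measure_ne_top _ _)
      have hAc0 : μ Aᶜ = 0 := by
        rw [prob_compl_eq_one_sub hA_m, hμA1, tsub_self]
      exact hB0 (measure_mono_null hBsubAc hAc0)
    have hpApos : 0 < pA := lt_of_lt_of_le hpBpos hAB
    have hpB1 : pB < 1 := lt_of_le_of_lt hAB hpA1
    set qA := stdNormalQuantile pA with hqAdef
    set qB := stdNormalQuantile pB with hqBdef
    have hqA : stdNormalCDF qA = pA := stdNormalCDF_quantile_eq hpApos hpA1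
    have hqB : stdNormalCDF qB = pB := stdNormalCDF_quantile_eq hpBpos hpB1
    by_cases hδ0 : δ = 0
    · -- δ = 0
      have hqlt : qB < qA := by
        have h0 : (0:ℝ) ≤ Real.sqrt (∑ i, δ i ^ 2) := Real.sqrt_nonneg _
        nlinarith [lt_of_le_of_lt h0 hδ]
      have hplt : pB < pA := by
        rw [← hqA, ← hqB]
        exact stdNormalCDF_strictMono hqlt
      have htlt : (μ B).toReal < (μ A).toReal := by
        calc (μ B).toReal ≤ pB := hB c hc
          _ < pA := hplt
          _ ≤ (μ A).toReal := hA
      have hmulν : ν = μ := by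
        rw [hνdef, hδ0]
        have hid : (fun ε : Fin d → ℝ => ε + 0) = id := by funext ε; simp
        rw [hid, Measure.map_id]
      rw [hmulν]
      exact (ENNReal.toReal_lt_toReal (measure_ne_top _ _) (measure_ne_top _ _)).mp htlt
    · -- δ ≠ 0 : Neyman–Pearson
      have hD2pos : 0 < ∑ i, δ i ^ 2 := by
        obtain ⟨i, hi⟩ := Function.ne_iff.mp hδ0
        refine Finset.sum_pos' (fun j _ => sq_nonneg _) ⟨i, Finset.mem_univ i, ?_⟩
        exact lt_of_le_of_ne (sq_nonneg _) (Ne.symm (pow_ne_zero 2 hi))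
      set c2 : ℝ := ∑ i, δ i ^ 2 with hc2def
      set D : ℝ := Real.sqrt c2 with hDdef
      have hDpos : 0 < D := Real.sqrt_pos.mpr hD2pos
      have hDsq : D ^ 2 = c2 := Real.sq_sqrt hD2pos.le
      set W : ℝ≥0 := Real.toNNReal c2 * V with hWdef
      have hW : W ≠ 0 := by
        simp only [hWdef, ne_eq, mul_eq_zero, not_or]
        refine ⟨?_, hV⟩
        simp only [Real.toNNReal_eq_zero, not_le]
        exact hD2pos
      have hWr : (W:ℝ) = c2 * σ ^ 2 := by
        simp only [hWdef, NNReal.coe_mul, Real.coe_toNNReal _ hD2pos.le, hVr]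
      have hsqrtW : Real.sqrt W = D * σ := by
        rw [hWr, hDdef, Real.sqrt_mul hD2pos.le, Real.sqrt_sq hσ.le]
      have hDσpos : 0 < D * σ := mul_pos hDpos hσ
      set t : (Fin d → ℝ) → ℝ := fun y => ∑ i, δ i * y i with htdef
      have ht_m : Measurable t := by
        rw [htdef]
        fun_prop
      have hmapt : μ.map t = gaussianReal 0 W := by
        rw [hμ, htdef, hWdef, hc2def]
        exact gaussian_sum V d δ
      have hmaptν : ν.map t = gaussianReal c2 W := by
        rw [hνdef, Measure.map_map ht_m (measurable_add_const δ)]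
        have hcomp : (t ∘ (· + δ)) = ((· + c2) ∘ t) := by
          funext y
          simp only [Function.comp_apply, htdef, Pi.add_apply]
          rw [hc2def, ← Finset.sum_add_distrib]
          exact Finset.sum_congr rfl fun i _ => by ring
        rw [hcomp, ← Measure.map_map (measurable_add_const c2) ht_m, hmapt,
          gaussianReal_map_add_const, zero_add]
      set βA : ℝ := D * σ * qA with hβAdef
      set βU : ℝ := -(D * σ * qB) with hβUdef
      set H : Set (Fin d → ℝ) := t ⁻¹' (Set.Iic βA) with hHdef
      set U : Set (Fin d → ℝ) := t ⁻¹' (Set.Ici βU) with hUdef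
      have hH_m : MeasurableSet H := ht_m measurableSet_Iic
      have hU_m : MeasurableSet U := ht_m measurableSet_Ici
      have hμH : (μ H).toReal = pA := by
        rw [hHdef, ← Measure.map_apply ht_m measurableSet_Iic, hmapt,
          gauss_Iic_toReal 0 βA W hW, hsqrtW]
        have harg : (βA - 0) / (D * σ) = qA := by
          rw [sub_zero, hβAdef]
          exact mul_div_cancel_left₀ qA hDσpos.ne'
        rw [harg, hqA]
      have hμU : (μ U).toReal = pB := by
        rw [hUdef, ← Measure.map_apply ht_m measurableSet_Ici, hmapt,
          gauss_Ici_toReal 0 βU W hW, hsqrtW]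
        have harg : (βU - 0) / (D * σ) = -qB := by
          rw [sub_zero, hβUdef, neg_div, mul_div_cancel_left₀ qB hDσpos.ne']
        rw [harg, stdNormalCDF_neg, hqB]
        ring
      have hμHle : μ H ≤ μ A := by
        refine (ENNReal.toReal_le_toReal (measure_ne_top _ _) (measure_ne_top _ _)).mp ?_
        rw [hμH]; exact hA
      have hμBle : μ B ≤ μ U := by
        refine (ENNReal.toReal_le_toReal (measure_ne_top _ _) (measure_ne_top _ _)).mp ?_
        rw [hμU]; exact hB c hc
      set g : ℝ → ℝ≥0∞ := fun s => ENNReal.ofReal (Real.exp (s / V - c2 / (2*V))) with hgdef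
      have hgmono : Monotone g := by
        intro s1 s2 h
        simp only [hgdef]
        apply ENNReal.ofReal_le_ofReal
        apply Real.exp_le_exp.mpr
        have hdiv : s1 / (V:ℝ) ≤ s2 / (V:ℝ) := by gcongr
        linarith
      have hLt : ∀ y, L y = g (t y) := by
        intro y
        simp only [hLdef, hgdef, htdef, hc2def]
        congr 1
        rw [Finset.sum_div, Finset.sum_div, ← Finset.sum_sub_distrib]
      have hNPlow : ν H ≤ ν A := by
        rw [hνdens]
        refine NP_lower μ hLmeas hA_m hH_m (g βA) ?_ ?_ hμHle
        · intro y hy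
          rw [hLt y]
          exact hgmono (Set.mem_Iic.mp (Set.mem_preimage.mp hy))
        · intro y hy
          rw [hLt y]
          exact hgmono (not_lt.mp (fun hlt => hy (Set.mem_preimage.mpr (Set.mem_Iic.mpr hlt.le))))
      have hNPup : ν B ≤ ν U := by
        rw [hνdens]
        refine NP_upper μ hLmeas hB_m hU_m (g βU) ?_ ?_ hμBle
        · intro y hy
          rw [hLt y]
          exact hgmono (Set.mem_Ici.mp (Set.mem_preimage.mp hy))
        · intro y hy
          rw [hLt y]
          refine hgmono (le_of_not_ge fun hle => hy (Set.mem_preimage.mpr (Set.mem_Ici.mpr hle)))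
      have hνH : (ν H).toReal = stdNormalCDF (qA - D / σ) := by
        rw [hHdef, ← Measure.map_apply ht_m measurableSet_Iic, hmaptν,
          gauss_Iic_toReal c2 βA W hW, hsqrtW]
        have harg : (βA - c2) / (D * σ) = qA - D / σ := by
          rw [hβAdef, ← hDsq]
          field_simp
        rw [harg]
      have hνU : (ν U).toReal = stdNormalCDF (qB + D / σ) := by
        rw [hUdef, ← Measure.map_apply ht_m measurableSet_Ici, hmaptν,
          gauss_Ici_toReal c2 βU W hW, hsqrtW]
        have harg : (βU - c2) / (D * σ) = -(qB + D / σ) := by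
          rw [hβUdef, ← hDsq]
          field_simp
          ring
        rw [harg, stdNormalCDF_neg]
        ring
      have hmid : stdNormalCDF (qB + D / σ) < stdNormalCDF (qA - D / σ) := by
        apply stdNormalCDF_strictMono
        have hDlt : D < σ / 2 * (qA - qB) := hδ
        have h2 : D / σ < (qA - qB) / 2 := by
          rw [div_lt_div_iff₀ hσ (by norm_num : (0:ℝ) < 2)]
          nlinarith
        linarith
      have hfinal : (ν B).toReal < (ν A).toReal := by
        calc (ν B).toReal ≤ (ν U).toReal :=
              ENNReal.toReal_mono (measure_ne_top _ _) hNPup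
          _ = stdNormalCDF (qB + D / σ) := hνU
          _ < stdNormalCDF (qA - D / σ) := hmid
          _ = (ν H).toReal := hνH.symm
          _ ≤ (ν A).toReal := ENNReal.toReal_mono (measure_ne_top _ _) hNPlow
      exact (ENNReal.toReal_lt_toReal (measure_ne_top _ _) (measure_ne_top _ _)).mp hfinal
end
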